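/- Let I be an ideal of subsets of ℝ (nonempty, closed under taking subsets and finite unions) with ℝ ∉ I, and suppose ℝ is the union of some subfamily of I. If add(I) = cov(I), then there exists a linear order ≺ on ℝ such that for every x ∈ ℝ the initial segment {y ∈ ℝ : y ≺ x} belongs to I (hence every proper initial segment of the ordering is in I). -/

import Mathlib

open MeasureTheory Set
open scoped ENNReal MeasureTheory

noncomputable section


/-- `covOf J` is the least cardinality of a subfamily of `J` whose union is everything. -/
def covOf {α : Type*} (J : Set (Set α)) : Cardinal :=
  sInf { c : Cardinal | ∃ S ⊆ J, ⋃₀ S = univ ∧ Cardinal.mk S = c }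


/-- `addOf J` is the least cardinality of a subfamily of `J` whose union is not in `J`. -/
def addOf {α : Type*} (J : Set (Set α)) : Cardinal :=
  sInf { c : Cardinal | ∃ S ⊆ J, ⋃₀ S ∉ J ∧ Cardinal.mk S = c }

/-- If `I` is an ideal on `ℝ` (with `ℝ ∉ I`) such that `ℝ` is covered by some subfamily
of `I`, and `add(I) = cov(I)`, then there is a linear (strict total) order on `ℝ` all of
whose proper initial segments are in `I`. -/
theorem stmt8 (I : Set (Set ℝ)) (hne : I.Nonempty)
    (hdown : ∀ A B : Set ℝ, A ⊆ B → B ∈ I → A ∈ I)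
    (hunion : ∀ A ∈ I, ∀ B ∈ I, A ∪ B ∈ I)
    (hproper : (univ : Set ℝ) ∉ I)
    (hcov : ∃ S ⊆ I, ⋃₀ S = univ)
    (heq : addOf I = covOf I) :
    ∃ lt : ℝ → ℝ → Prop, IsStrictTotalOrder ℝ lt ∧ ∀ x : ℝ, {y : ℝ | lt y x} ∈ I := by
  classical
  -- a cover of minimal cardinality
  have hmem : covOf I ∈ { c : Cardinal | ∃ S ⊆ I, ⋃₀ S = univ ∧ Cardinal.mk S = c } := by
    obtain ⟨S₀, hS₀, hU₀⟩ := hcov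
    exact csInf_mem ⟨Cardinal.mk S₀, S₀, hS₀, hU₀, rfl⟩
  obtain ⟨S, hSI, hSU, hScard⟩ := hmem
  set κ := covOf I with hκ
  -- identify `S` with the canonical well-ordered type of cardinality `κ`
  have hT : Cardinal.mk S = Cardinal.mk κ.ord.ToType := by
    rw [Cardinal.mk_ord_toType, hScard]
  obtain ⟨e⟩ := Cardinal.eq.mp hT
  set f : κ.ord.ToType → Set ℝ := fun a => ((e.symm a : S) : Set ℝ) with hf
  have hfI : ∀ a, f a ∈ I := fun a => hSI (e.symm a).2
  -- the rank function
  have hRne : ∀ x : ℝ, {a : κ.ord.ToType | x ∈ f a}.Nonempty := by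
    intro x
    have hx : x ∈ ⋃₀ S := hSU ▸ mem_univ x
    obtain ⟨s, hs, hxs⟩ := hx
    refine ⟨e ⟨s, hs⟩, ?_⟩
    simp only [hf, mem_setOf_eq, Equiv.symm_apply_apply]
    exact hxs
  set rk : ℝ → κ.ord.ToType := fun x =>
    (wellFounded_lt (α := κ.ord.ToType)).min {a | x ∈ f a} (hRne x) with hrk
  have hrk_mem : ∀ x : ℝ, x ∈ f (rk x) := fun x =>
    (wellFounded_lt).min_mem {a | x ∈ f a} (hRne x)
  have hrk_min : ∀ x : ℝ, ∀ a, x ∈ f a → ¬ a < rk x := fun x a ha =>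
    (wellFounded_lt).not_lt_min {a | x ∈ f a} ha
  -- key fact: unions of fewer than `κ` members of `I` lie in `I`
  have hsmall : ∀ B : Set (Set ℝ), B ⊆ I → Cardinal.mk B < κ → ⋃₀ B ∈ I := by
    intro B hBI hBκ
    by_contra hB
    have : addOf I ≤ Cardinal.mk B := csInf_le' ⟨B, hBI, hB, rfl⟩
    rw [heq] at this
    exact absurd (this.trans_lt hBκ) (lt_irrefl _)
  -- the lexicographic order
  refine ⟨fun x y => rk x < rk y ∨ (rk x = rk y ∧ x < y), ?_, ?_⟩
  · have hirr : ∀ x : ℝ, ¬ (rk x < rk x ∨ (rk x = rk x ∧ x < x)) := by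
      rintro x (h | ⟨_, h⟩) <;> exact lt_irrefl _ h
    have htr : ∀ x y z : ℝ, (rk x < rk y ∨ (rk x = rk y ∧ x < y)) →
        (rk y < rk z ∨ (rk y = rk z ∧ y < z)) → (rk x < rk z ∨ (rk x = rk z ∧ x < z)) := by
      rintro x y z (h₁ | ⟨h₁, h₁'⟩) (h₂ | ⟨h₂, h₂'⟩)
      · exact Or.inl (h₁.trans h₂)
      · exact Or.inl (h₂ ▸ h₁)
      · exact Or.inl (h₁ ▸ h₂)
      · exact Or.inr ⟨h₁.trans h₂, h₁'.trans h₂'⟩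
    have htri : ∀ x y : ℝ, (rk x < rk y ∨ (rk x = rk y ∧ x < y)) ∨ x = y ∨
        (rk y < rk x ∨ (rk y = rk x ∧ y < x)) := by
      intro x y
      rcases lt_trichotomy (rk x) (rk y) with h | h | h
      · exact Or.inl (Or.inl h)
      · rcases lt_trichotomy x y with h' | h' | h'
        · exact Or.inl (Or.inr ⟨h, h'⟩)
        · exact Or.inr (Or.inl h')
        · exact Or.inr (Or.inr (Or.inr ⟨h.symm, h'⟩))
      · exact Or.inr (Or.inr (Or.inl h))
    exact { irrefl := hirr, trans := htr, trichotomous := fun a b h₁ h₂ => ((htri a b).resolve_left h₁).resolve_right h₂ }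
  · intro x
    have hsub : {y : ℝ | rk y < rk x ∨ (rk y = rk x ∧ y < x)} ⊆
        ⋃₀ (f '' {a | a < rk x}) ∪ f (rk x) := by
      rintro y (h | ⟨h, _⟩)
      · exact Or.inl ⟨f (rk y), ⟨rk y, h, rfl⟩, hrk_mem y⟩
      · exact Or.inr (h ▸ hrk_mem y)
    refine hdown _ _ hsub (hunion _ ?_ _ (hfI _))
    apply hsmall
    · rintro _ ⟨a, _, rfl⟩
      exact hfI a
    · have h1 : Cardinal.mk (f '' {a | a < rk x}) ≤ Cardinal.mk {a | a < rk x} :=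
        Cardinal.mk_image_le
      have h2 : Cardinal.mk {a : κ.ord.ToType | a < rk x} < κ :=
        Cardinal.mk_Iio_ord_toType (rk x)
      exact h1.trans_lt h2
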